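/- arXiv:math/0602545 — 3 statements merged into one kernel-verified Lean document; each statement's English description precedes it below -/
import Mathlib

section
/- Let D ⊆ ℝ^k be a nonempty closed set and let y ∈ ℝ^k with y ∉ D. Suppose there exists ρ > dist(y, D) such that every z ∈ ℝ^k with dist(z, D) ≤ ρ has a unique nearest point in D, and let p ∈ D be the unique nearest point to y (i.e., the unique p ∈ D with ‖y − p‖ = dist(y, D)). Then the distance function z ↦ dist(z, D) is Fréchet differentiable at y, and its gradient at y equals (y − p)/‖y − p‖. -/
open Metric Set

local notation "⟪" x ", " y "⟫" => @inner ℝ _ _ x y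

private lemma norm_upper_aux {E : Type*} [NormedAddCommGroup E] [InnerProductSpace ℝ E]
    (a h : E) (ha : a ≠ 0) (hh : ‖h‖ ≤ ‖a‖) :
    ‖a + h‖ ≤ ‖a‖ + ⟪a, h⟫ / ‖a‖ + ‖h‖ ^ 2 / (2 * ‖a‖) := by
  have hna : (0:ℝ) < ‖a‖ := norm_pos_iff.2 ha
  have hip : -(‖a‖ * ‖h‖) ≤ ⟪a, h⟫ := neg_le_of_abs_le (abs_real_inner_le_norm a h)
  have hr : -‖h‖ ≤ ⟪a, h⟫ / ‖a‖ := by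
    rw [neg_le, ← neg_div, div_le_iff₀ hna]
    nlinarith
  have hs0 : (0:ℝ) ≤ ‖h‖ ^ 2 / (2 * ‖a‖) := by positivity
  have hB : 0 ≤ ‖a‖ + ⟪a, h⟫ / ‖a‖ + ‖h‖ ^ 2 / (2 * ‖a‖) := by linarith
  have h1 : ⟪a, h⟫ = ‖a‖ * (⟪a, h⟫ / ‖a‖) := by field_simp
  have h2 : ‖h‖ ^ 2 = 2 * ‖a‖ * (‖h‖ ^ 2 / (2 * ‖a‖)) := by field_simp
  have hsq : ‖a + h‖ ^ 2 ≤ (‖a‖ + ⟪a, h⟫ / ‖a‖ + ‖h‖ ^ 2 / (2 * ‖a‖)) ^ 2 := by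
    rw [norm_add_sq_real]
    nlinarith [sq_nonneg (⟪a, h⟫ / ‖a‖ + ‖h‖ ^ 2 / (2 * ‖a‖))]
  calc ‖a + h‖ = Real.sqrt (‖a + h‖ ^ 2) := (Real.sqrt_sq (norm_nonneg _)).symm
    _ ≤ Real.sqrt ((‖a‖ + ⟪a, h⟫ / ‖a‖ + ‖h‖ ^ 2 / (2 * ‖a‖)) ^ 2) := Real.sqrt_le_sqrt hsq
    _ = ‖a‖ + ⟪a, h⟫ / ‖a‖ + ‖h‖ ^ 2 / (2 * ‖a‖) := Real.sqrt_sq hB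

private lemma norm_lower_aux {E : Type*} [NormedAddCommGroup E] [InnerProductSpace ℝ E]
    (a h : E) (ha : a ≠ 0) :
    ‖a‖ + ⟪a, h⟫ / ‖a‖ ≤ ‖a + h‖ := by
  have hna : (0:ℝ) < ‖a‖ := norm_pos_iff.2 ha
  have h1 : ⟪a, a + h⟫ ≤ ‖a‖ * ‖a + h‖ := real_inner_le_norm a (a + h)
  have h2 : ⟪a, a + h⟫ = ‖a‖ ^ 2 + ⟪a, h⟫ := by
    rw [inner_add_right, real_inner_self_eq_norm_sq]
  rw [h2] at h1
  have h3 : ‖a‖ + ⟪a, h⟫ / ‖a‖ = (‖a‖ ^ 2 + ⟪a, h⟫) / ‖a‖ := by field_simp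
  rw [h3, div_le_iff₀ hna]
  nlinarith

theorem stmt6 (k : ℕ) (D : Set (EuclideanSpace ℝ (Fin k))) (hD : IsClosed D)
    (hne : D.Nonempty) (y : EuclideanSpace ℝ (Fin k)) (hy : y ∉ D)
    (ρ : ℝ) (hρ : Metric.infDist y D < ρ)
    (huniq : ∀ z : EuclideanSpace ℝ (Fin k), Metric.infDist z D ≤ ρ →
      ∃! q, q ∈ D ∧ dist z q = Metric.infDist z D)
    (p : EuclideanSpace ℝ (Fin k)) (hp : p ∈ D)
    (hpy : dist y p = Metric.infDist y D) :
    HasGradientAt (fun z => Metric.infDist z D) ((‖y - p‖)⁻¹ • (y - p)) y := by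
  set dy := Metric.infDist y D with hdydef
  have hdy : 0 < dy := (hD.notMem_iff_infDist_pos hne).1 hy
  have hnyp : ‖y - p‖ = dy := by rw [← dist_eq_norm]; exact hpy
  have hyp0 : y - p ≠ 0 := by
    intro h0
    rw [h0, norm_zero] at hnyp; exact hdy.ne' hnyp.symm
  -- uniqueness at y
  have huy := huniq y hρ.le
  obtain ⟨q₁, hq₁, huq⟩ := huy
  have hpq₁ : p = q₁ := huq p ⟨hp, hpy⟩
  have hyuniq : ∀ q, q ∈ D → dist y q = dy → q = p := by
    intro q hq hqd
    rw [hpq₁]; exact huq q ⟨hq, hqd⟩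
  -- the gradient vector
  set v : EuclideanSpace ℝ (Fin k) := (‖y - p‖)⁻¹ • (y - p) with hvdef
  rw [hasGradientAt_iff_isLittleO, Asymptotics.isLittleO_iff]
  intro c hc
  -- continuity of q ↦ (‖y-q‖)⁻¹ • (y-q) at p
  have hGcont : ContinuousAt (fun q : EuclideanSpace ℝ (Fin k) => (‖y - q‖)⁻¹ • (y - q)) p := by
    apply ContinuousAt.fun_smul
    · apply ContinuousAt.inv₀
      · exact ((continuous_const.sub continuous_id).norm).continuousAt
      · rw [hnyp]; exact hdy.ne'
    · exact (continuous_const.sub continuous_id).continuousAt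
  obtain ⟨ε, hε, hGε⟩ := Metric.continuousAt_iff.1 hGcont c hc
  -- projection stability: approximate nearest points are near p
  have hstab : ∃ δ > 0, ∀ q ∈ D, dist y q ≤ dy + δ → dist q p < ε := by
    classical
    set K := (D ∩ Metric.closedBall y (dy + 1)) ∩ {q | ε ≤ dist q p} with hKdef
    have hKclosed : IsClosed K := by
      apply IsClosed.inter
      · exact hD.inter Metric.isClosed_closedBall
      · exact isClosed_le continuous_const (continuous_id.dist continuous_const)
    have hKcompact : IsCompact K := by
      apply (isCompact_closedBall y (dy + 1)).of_isClosed_subset hKclosed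
      intro q hq; exact hq.1.2
    by_cases hK : K.Nonempty
    · obtain ⟨q₀, hq₀K, hq₀min⟩ := hKcompact.exists_isMinOn hK
        ((continuous_const.dist continuous_id).continuousOn (s := K))
      have hq₀D : q₀ ∈ D := hq₀K.1.1
      have hq₀ge : dy ≤ dist y q₀ := Metric.infDist_le_dist_of_mem hq₀D
      have hq₀gt : dy < dist y q₀ := by
        rcases hq₀ge.lt_or_eq with h | h
        · exact h
        · exfalso
          have := hyuniq q₀ hq₀D h.symm
          have : ε ≤ dist q₀ p := hq₀K.2
          rw [hyuniq q₀ hq₀D h.symm] at this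
          simp at this
          exact hε.not_ge this
      refine ⟨min (dist y q₀ - dy) 1 / 2, div_pos (lt_min (by linarith) one_pos) two_pos, ?_⟩
      intro q hqD hqle
      by_contra hqp
      push_neg at hqp
      have hqK : q ∈ K := by
        refine ⟨⟨hqD, ?_⟩, hqp⟩
        · rw [Metric.mem_closedBall, dist_comm]
          calc dist y q ≤ dy + min (dist y q₀ - dy) 1 / 2 := hqle
            _ ≤ dy + 1 := by
                have : min (dist y q₀ - dy) 1 ≤ 1 := min_le_right _ _
                linarith
      have := hq₀min hqK
      simp only [Set.mem_setOf_eq] at this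
      have hlt : dy + min (dist y q₀ - dy) 1 / 2 < dist y q₀ := by
        have h1 : min (dist y q₀ - dy) 1 ≤ dist y q₀ - dy := min_le_left _ _
        have h2 : 0 < min (dist y q₀ - dy) 1 := lt_min (by linarith) one_pos
        linarith
      have : dist y q₀ ≤ dist y q := this
      linarith [hqle.trans_lt hlt]
    · refine ⟨1, one_pos, ?_⟩
      intro q hqD hqle
      by_contra hqp
      push_neg at hqp
      exact hK ⟨q, ⟨hqD, by rw [Metric.mem_closedBall, dist_comm]; exact hqle⟩, hqp⟩
  obtain ⟨δ, hδ, hδstab⟩ := hstab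
  -- final radius
  rw [Metric.eventually_nhds_iff]
  refine ⟨min (min (δ / 2) dy) (dy * c), lt_min (lt_min (by linarith) hdy) (mul_pos hdy hc), ?_⟩
  intro z hz
  set h := z - y with hhdef
  have hzy : dist z y = ‖h‖ := dist_eq_norm z y
  have hh1 : ‖h‖ < δ / 2 := hzy ▸ hz.trans_le ((min_le_left _ _).trans (min_le_left _ _))
  have hh2 : ‖h‖ ≤ dy := le_of_lt (hzy ▸ hz.trans_le ((min_le_left _ _).trans (min_le_right _ _)))
  have hh3 : ‖h‖ ≤ dy * c := le_of_lt (hzy ▸ hz.trans_le (min_le_right _ _))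
  have hvinner : ∀ w : EuclideanSpace ℝ (Fin k), ⟪v, w⟫ = ⟪y - p, w⟫ / ‖y - p‖ := by
    intro w
    rw [hvdef, real_inner_smul_left]
    ring
  -- upper bound
  have hupper : Metric.infDist z D - dy - ⟪v, h⟫ ≤ c * ‖h‖ := by
    have h1 : Metric.infDist z D ≤ ‖(y - p) + h‖ := by
      have : (y - p) + h = z - p := by rw [hhdef]; abel
      rw [this, ← dist_eq_norm]
      exact Metric.infDist_le_dist_of_mem hp
    have h2 := norm_upper_aux (y - p) h hyp0 (by rw [hnyp]; exact hh2)
    rw [hnyp] at h2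
    have h3 : ‖h‖ ^ 2 / (2 * dy) ≤ c * ‖h‖ := by
      rw [div_le_iff₀ (by positivity)]
      nlinarith [norm_nonneg h]
    have h4 : ⟪v, h⟫ = ⟪y - p, h⟫ / dy := by rw [hvinner, hnyp]
    linarith [h1.trans h2]
  -- lower bound
  have hlower : -(c * ‖h‖) ≤ Metric.infDist z D - dy - ⟪v, h⟫ := by
    obtain ⟨q, hqD, hqdist⟩ := hD.exists_infDist_eq_dist hne z
    have hyq : dy ≤ dist y q := Metric.infDist_le_dist_of_mem hqD
    have hyq0 : y - q ≠ 0 := by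
      intro h0
      have : dist y q = 0 := by rw [dist_eq_norm, h0, norm_zero]
      linarith [hdy.trans_le hyq, this ▸ hyq]
    have hnear : dist q p < ε := by
      apply hδstab q hqD
      calc dist y q ≤ dist y z + dist z q := dist_triangle y z q
        _ = dist z y + Metric.infDist z D := by rw [dist_comm, hqdist]
        _ ≤ dist z y + (dy + dist z y) := by
            have := Metric.infDist_le_infDist_add_dist (x := z) (y := y) (s := D)
            linarith
        _ ≤ dy + δ := by rw [hzy]; linarith
    have hG : dist ((‖y - q‖)⁻¹ • (y - q)) ((‖y - p‖)⁻¹ • (y - p)) < c := hGε hnear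
    set u : EuclideanSpace ℝ (Fin k) := (‖y - q‖)⁻¹ • (y - q) with hudef
    have h1 : ‖y - q‖ + ⟪y - q, h⟫ / ‖y - q‖ ≤ ‖(y - q) + h‖ := norm_lower_aux (y - q) h hyq0
    have h2 : (y - q) + h = z - q := by rw [hhdef]; abel
    have h3 : Metric.infDist z D = ‖(y - q) + h‖ := by rw [h2, ← dist_eq_norm]; exact hqdist
    have huq : ⟪u, h⟫ = ⟪y - q, h⟫ / ‖y - q‖ := by
      rw [hudef, real_inner_smul_left]; ring
    have h4 : dy + ⟪u, h⟫ ≤ Metric.infDist z D := by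
      rw [h3, huq]
      have : dy ≤ ‖y - q‖ := by rw [← dist_eq_norm]; exact hyq
      linarith
    have h5 : ⟪v, h⟫ - ⟪u, h⟫ ≤ c * ‖h‖ := by
      have : ⟪v - u, h⟫ ≤ ‖v - u‖ * ‖h‖ := real_inner_le_norm _ _
      rw [inner_sub_left] at this
      have hdvu : ‖v - u‖ < c := by
        rw [← dist_eq_norm]
        rw [dist_comm] at hG
        exact hG
      nlinarith [norm_nonneg h, norm_nonneg (v - u)]
    linarith
  -- conclude
  have : |Metric.infDist z D - dy - ⟪v, h⟫| ≤ c * ‖h‖ := abs_le.2 ⟨hlower, hupper⟩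
  simpa [hhdef, Real.norm_eq_abs] using this
end

section
/- Let z ∈ ℝ^k be a unit vector, u ∈ ℝ, and let D_u = {x ∈ ℝ^k : ⟨x, z⟩ ≥ u} be the closed half-space. Then for every r ≥ 0, T(D_u, r) = D_{u−r}, and γ_{ℝ^k}(T(D_u, r)) = 1 − Φ(u) + Σ_{j=1}^∞ (r^j/j!) · (1/√(2π)) · H_{j−1}(u) · e^{−u²/2}, the series converging absolutely. -/
open MeasureTheory Real
open scoped RealInnerProductSpace

/-- The standard Gaussian measure on `ℝ^k`, with density `(2π)^{-k/2} e^{-‖x‖²/2}`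
with respect to Lebesgue measure. -/
noncomputable def stdGaussian (k : ℕ) : Measure (EuclideanSpace ℝ (Fin k)) :=
  volume.withDensity fun x =>
    ENNReal.ofReal ((2 * π) ^ (-(k : ℝ) / 2) * Real.exp (-‖x‖ ^ 2 / 2))

/-- The closed tube (r-thickening) of a set. -/
def tube {k : ℕ} (A : Set (EuclideanSpace ℝ (Fin k))) (r : ℝ) :
    Set (EuclideanSpace ℝ (Fin k)) :=
  {y | Metric.infDist y A ≤ r}

/-- The `j`-th probabilists' Hermite polynomial, evaluated at `x`. -/
noncomputable def hermiteP (j : ℕ) (x : ℝ) : ℝ := Polynomial.aeval x (Polynomial.hermite j)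

/-- The standard normal cumulative distribution function. -/
noncomputable def stdNormalCDF (u : ℝ) : ℝ :=
  ∫ t in Set.Iic u, Real.exp (-t ^ 2 / 2) / Real.sqrt (2 * π)

open Polynomial

lemma cgauss_diff : Differentiable ℂ (fun z : ℂ => Complex.exp (-(z ^ 2) / 2)) := by
  apply Differentiable.cexp
  fun_prop

lemma iteratedDeriv_cgauss (n : ℕ) :
    iteratedDeriv n (fun z : ℂ => Complex.exp (-(z ^ 2) / 2)) =
    fun z => (-1) ^ n * aeval z (hermite n) * Complex.exp (-(z ^ 2) / 2) := by
  induction n with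
  | zero => simp [iteratedDeriv_zero]
  | succ n ih =>
    rw [iteratedDeriv_succ, ih]
    funext z
    have hP : DifferentiableAt ℂ (fun w : ℂ => aeval w (hermite n)) z :=
      (Polynomial.differentiable_aeval (hermite n)).differentiableAt
    have hE : DifferentiableAt ℂ (fun w : ℂ => Complex.exp (-(w ^ 2) / 2)) z :=
      cgauss_diff.differentiableAt
    have hgd : deriv (fun w : ℂ => Complex.exp (-(w ^ 2) / 2)) z
        = -z * Complex.exp (-(z ^ 2) / 2) := by
      rw [deriv_cexp (by fun_prop)]
      simp [deriv_div_const]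
      ring
    have : (fun w : ℂ => (-1 : ℂ) ^ n * aeval w (hermite n) * Complex.exp (-(w ^ 2) / 2))
        = fun w => (-1 : ℂ) ^ n * ((fun w : ℂ => aeval w (hermite n)) w *
            (fun w : ℂ => Complex.exp (-(w ^ 2) / 2)) w) := by
      funext w; ring
    rw [this, deriv_const_mul _ (hP.fun_mul hE), deriv_fun_mul hP hE, hgd, Polynomial.deriv_aeval,
      hermite_succ, map_sub, map_mul, aeval_X, pow_succ]
    ring

lemma aeval_hermite_ofReal (u : ℝ) (n : ℕ) :
    aeval (u : ℂ) (hermite n) = ((aeval u (hermite n) : ℝ) : ℂ) :=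
  (Polynomial.aeval_algHom_apply (Complex.ofRealHom.toIntAlgHom) u (hermite n))

lemma hasSum_hermite (u s : ℝ) :
    HasSum (fun n : ℕ => s ^ n / n.factorial * (aeval u (hermite n) * Real.exp (-(u ^ 2) / 2)))
      (Real.exp (-((u - s) ^ 2) / 2)) := by
  have H := Complex.hasSum_taylorSeries_of_entire cgauss_diff (u : ℂ) ((u : ℂ) - s)
  simp only [iteratedDeriv_cgauss] at H
  rw [← Complex.hasSum_ofReal]
  convert H using 2 with n
  · rfl
  · push_cast [aeval_hermite_ofReal, Complex.ofReal_exp]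
    rw [smul_eq_mul, smul_eq_mul]
    have h2 : ((u : ℂ) - s - u) = -s := by ring
    rw [h2, neg_pow (s : ℂ) n]
    ring_nf
    rw [pow_mul']
    norm_num
  · rw [Complex.ofReal_exp]
    push_cast
    ring_nf

lemma hermite_term_bound (u r : ℝ) :
    ∃ C : ℝ, 0 ≤ C ∧ ∀ n : ℕ,
      (2 * r + 1) ^ n / n.factorial * |aeval u (hermite n) * Real.exp (-(u ^ 2) / 2)| ≤ C := by
  have H := (hasSum_hermite u (2 * r + 1)).summable
  have h0 := H.tendsto_atTop_zero
  have h1 : Filter.Tendsto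
      (fun n : ℕ => |(2 * r + 1) ^ n / n.factorial *
        (aeval u (hermite n) * Real.exp (-(u ^ 2) / 2))|) Filter.atTop (nhds 0) := by
    simpa using h0.abs
  obtain ⟨C, hC⟩ := h1.bddAbove_range
  refine ⟨C, le_trans (abs_nonneg _) (hC (Set.mem_range_self 0)), fun n => ?_⟩
  have := hC (Set.mem_range_self n)
  calc (2 * r + 1) ^ n / n.factorial * |aeval u (hermite n) * Real.exp (-(u ^ 2) / 2)|
      ≤ |(2 * r + 1) ^ n / n.factorial| * |aeval u (hermite n) * Real.exp (-(u ^ 2) / 2)| := by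
        gcongr; exact le_abs_self _
    _ = |(2 * r + 1) ^ n / n.factorial *
        (aeval u (hermite n) * Real.exp (-(u ^ 2) / 2))| := (abs_mul _ _).symm
    _ ≤ C := this

lemma summable_abs_series (u r : ℝ) (hr : 0 ≤ r) :
    Summable (fun j : ℕ => |r ^ (j + 1) / ((j + 1).factorial : ℝ) *
      ((1 / Real.sqrt (2 * π)) * aeval u (hermite j) * Real.exp (-u ^ 2 / 2))|) := by
  obtain ⟨C, hC0, hC⟩ := hermite_term_bound u r
  have h2r : (0 : ℝ) < 2 * r + 1 := by linarith
  set q : ℝ := r / (2 * r + 1) with hq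
  have hq0 : 0 ≤ q := div_nonneg hr h2r.le
  have hq1 : q < 1 := by
    rw [hq, div_lt_one h2r]; linarith
  have hgeom : Summable (fun n : ℕ => (1 / Real.sqrt (2 * π)) * r * C * q ^ n) :=
    (summable_geometric_of_lt_one hq0 hq1).mul_left _
  refine Summable.of_nonneg_of_le (fun n => abs_nonneg _) (fun n => ?_) hgeom
  have hc0 : (0:ℝ) ≤ 1 / Real.sqrt (2 * π) := by positivity
  have hrn : r ^ n = q ^ n * (2 * r + 1) ^ n := by
    rw [← mul_pow, hq, div_mul_cancel₀ _ h2r.ne']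
  set A : ℝ := |aeval u (hermite n) * Real.exp (-u ^ 2 / 2)| with hA
  have hA0 : 0 ≤ A := abs_nonneg _
  have key : |r ^ (n + 1) / ((n + 1).factorial : ℝ) *
      ((1 / Real.sqrt (2 * π)) * aeval u (hermite n) * Real.exp (-u ^ 2 / 2))|
      = r ^ (n + 1) / ((n + 1).factorial : ℝ) * (1 / Real.sqrt (2 * π)) * A := by
    rw [hA, abs_mul, abs_mul, abs_mul,
      abs_of_nonneg (by positivity : (0:ℝ) ≤ r ^ (n+1) / ((n + 1).factorial : ℝ)),
      abs_of_nonneg hc0, abs_mul]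
    ring
  rw [key]
  have hfact : (n.factorial : ℝ) ≤ ((n + 1).factorial : ℝ) := by
    exact_mod_cast Nat.factorial_le (Nat.le_succ n)
  have hfact0 : (0:ℝ) < (n.factorial : ℝ) := by exact_mod_cast n.factorial_pos
  have step1 : r ^ (n + 1) / ((n + 1).factorial : ℝ)
      ≤ r * (q ^ n * ((2 * r + 1) ^ n / n.factorial)) := by
    have h1 : r ^ (n + 1) / ((n + 1).factorial : ℝ) ≤ r ^ (n + 1) / (n.factorial : ℝ) := by
      gcongr
    refine h1.trans (le_of_eq ?_)
    rw [pow_succ, mul_comm (r ^ n) r, hrn]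
    ring
  calc r ^ (n + 1) / ((n + 1).factorial : ℝ) * (1 / Real.sqrt (2 * π)) * A
      ≤ r * (q ^ n * ((2 * r + 1) ^ n / n.factorial)) * (1 / Real.sqrt (2 * π)) * A := by gcongr
    _ = (1 / Real.sqrt (2 * π)) * r * ((2 * r + 1) ^ n / n.factorial * A) * q ^ n := by ring
    _ ≤ (1 / Real.sqrt (2 * π)) * r * C * q ^ n :=
        mul_le_mul_of_nonneg_right
          (mul_le_mul_of_nonneg_left (hC n) (by positivity)) (by positivity)

lemma hasSum_tail (u r : ℝ) (hr : 0 ≤ r) :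
    HasSum (fun j : ℕ => r ^ (j + 1) / ((j + 1).factorial : ℝ) *
      ((1 / Real.sqrt (2 * π)) * aeval u (hermite j) * Real.exp (-u ^ 2 / 2)))
      (∫ t in Set.Ioc (u - r) u, Real.exp (-t ^ 2 / 2) / Real.sqrt (2 * π)) := by
  set c : ℝ := 1 / Real.sqrt (2 * π) with hc
  have hc0 : 0 ≤ c := by rw [hc]; positivity
  set K : ℕ → ℝ := fun j => c * aeval u (hermite j) * Real.exp (-u ^ 2 / 2) / j.factorial with hK
  set F : ℕ → ℝ → ℝ := fun j s => s ^ j * K j with hF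
  set μ : Measure ℝ := volume.restrict (Set.Ioc 0 r) with hμ
  have hint : ∀ j, Integrable (F j) μ := by
    intro j
    exact (Continuous.integrableOn_Ioc (by fun_prop))
  have hpow : ∀ j : ℕ, (∫ s in Set.Ioc 0 r, s ^ j) = r ^ (j + 1) / (j + 1) := by
    intro j
    rw [← intervalIntegral.integral_of_le hr, integral_pow]
    push_cast
    ring
  have hFint : ∀ j : ℕ, (∫ s, F j s ∂μ) = r ^ (j + 1) / ((j + 1).factorial : ℝ) *
      (c * aeval u (hermite j) * Real.exp (-u ^ 2 / 2)) := by
    intro j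
    rw [hμ, hF]
    simp only
    rw [integral_mul_const, hpow j, hK]
    simp only
    rw [Nat.factorial_succ]
    push_cast
    have h1 : ((j : ℝ) + 1) ≠ 0 := by positivity
    have h2 : ((j.factorial : ℝ)) ≠ 0 := by
      exact_mod_cast j.factorial_pos.ne'
    field_simp
  have hFnorm : ∀ j : ℕ, (∫ s, ‖F j s‖ ∂μ) = |r ^ (j + 1) / ((j + 1).factorial : ℝ) *
      (c * aeval u (hermite j) * Real.exp (-u ^ 2 / 2))| := by
    intro j
    have heq : ∀ s ∈ Set.Ioc (0:ℝ) r, ‖F j s‖ = s ^ j * |K j| := by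
      intro s hs
      rw [hF]
      simp only [Real.norm_eq_abs, abs_mul, abs_pow, abs_of_nonneg hs.1.le]
    rw [hμ, setIntegral_congr_fun measurableSet_Ioc heq, integral_mul_const, hpow j]
    rw [abs_mul, abs_of_nonneg (by positivity : (0:ℝ) ≤ r ^ (j+1) / ((j + 1).factorial : ℝ))]
    rw [hK]
    simp only
    rw [Nat.factorial_succ, abs_div, abs_of_nonneg (by positivity : (0:ℝ) ≤ (j.factorial : ℝ))]
    have h1 : ((j : ℝ) + 1) ≠ 0 := by positivity
    have h2 : ((j.factorial : ℝ)) ≠ 0 := by exact_mod_cast j.factorial_pos.ne'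
    field_simp
    push_cast; ring
  have hsum : Summable fun j => ∫ s, ‖F j s‖ ∂μ := by
    simp only [hFnorm]
    simpa [hc] using summable_abs_series u r hr
  have H := MeasureTheory.hasSum_integral_of_summable_integral_norm hint hsum
  have htsum : ∀ s : ℝ, (∑' j, F j s) = Real.exp (-(u - s) ^ 2 / 2) * c := by
    intro s
    have h1 := (hasSum_hermite u s).mul_right c
    have h2 : (fun n : ℕ => s ^ n / n.factorial *
        (aeval u (hermite n) * Real.exp (-(u ^ 2) / 2)) * c) = fun n => F n s := by
      funext n
      rw [hF, hK]
      simp only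
      ring
    rw [h2] at h1
    rw [h1.tsum_eq]
  have hval : (∫ s, (∑' j, F j s) ∂μ)
      = ∫ t in Set.Ioc (u - r) u, Real.exp (-t ^ 2 / 2) / Real.sqrt (2 * π) := by
    rw [hμ, integral_congr_ae (MeasureTheory.ae_of_all _ fun s => htsum s)]
    rw [← intervalIntegral.integral_of_le hr]
    have h3 : (∫ s in (0:ℝ)..r, Real.exp (-(u - s) ^ 2 / 2) * c)
        = ∫ t in (u - r)..(u - 0), Real.exp (-t ^ 2 / 2) * c :=
      intervalIntegral.integral_comp_sub_left (fun t => Real.exp (-t ^ 2 / 2) * c) u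
    rw [h3]
    rw [sub_zero, intervalIntegral.integral_of_le (by linarith : u - r ≤ u)]
    congr 1
    funext t
    rw [hc, mul_one_div]
  rw [hval] at H
  have hfun : (fun j : ℕ => ∫ s, F j s ∂μ)
      = fun j : ℕ => r ^ (j + 1) / ((j + 1).factorial : ℝ) *
        (c * aeval u (hermite j) * Real.exp (-u ^ 2 / 2)) := funext hFint
  rw [hfun] at H
  exact H

lemma tube_eq {k : ℕ} (z : EuclideanSpace ℝ (Fin k)) (hz : ‖z‖ = 1) (u r : ℝ) (hr : 0 ≤ r) :
    {y : EuclideanSpace ℝ (Fin k) | Metric.infDist y {x | u ≤ ⟪x, z⟫} ≤ r}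
      = {x | u - r ≤ ⟪x, z⟫} := by
  have hne : ({x : EuclideanSpace ℝ (Fin k) | u ≤ ⟪x, z⟫}).Nonempty := by
    refine ⟨u • z, ?_⟩
    simp only [Set.mem_setOf_eq, real_inner_smul_left]
    rw [real_inner_self_eq_norm_sq, hz]
    norm_num
  ext y
  simp only [Set.mem_setOf_eq]
  constructor
  · intro h
    have hle : u - ⟪y, z⟫ ≤ Metric.infDist y {x | u ≤ ⟪x, z⟫} := by
      by_contra hlt
      push_neg at hlt
      obtain ⟨a, ha, hda⟩ := (Metric.infDist_lt_iff hne).mp hlt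
      have h1 : ⟪a, z⟫ - ⟪y, z⟫ = ⟪a - y, z⟫ := by
        rw [inner_sub_left]
      have h2 : ⟪a - y, z⟫ ≤ ‖a - y‖ := by
        calc ⟪a - y, z⟫ ≤ ‖a - y‖ * ‖z‖ := real_inner_le_norm _ _
          _ = ‖a - y‖ := by rw [hz, mul_one]
      have h3 : dist y a = ‖a - y‖ := by rw [dist_eq_norm, norm_sub_rev]
      have h4 := ha
      simp only [Set.mem_setOf_eq] at h4
      linarith
    linarith
  · intro h
    set c : ℝ := max (u - ⟪y, z⟫) 0 with hcdef
    have hc0 : 0 ≤ c := le_max_right _ _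
    have hcr : c ≤ r := max_le (by linarith) hr
    have hmem : y + c • z ∈ {x : EuclideanSpace ℝ (Fin k) | u ≤ ⟪x, z⟫} := by
      simp only [Set.mem_setOf_eq, inner_add_left, real_inner_smul_left]
      rw [real_inner_self_eq_norm_sq, hz]
      have : u - ⟪y, z⟫ ≤ c := le_max_left _ _
      nlinarith
    have hdist : dist y (y + c • z) = c := by
      rw [dist_eq_norm]
      have : y - (y + c • z) = -(c • z) := by abel
      rw [this, norm_neg, norm_smul, hz, mul_one, Real.norm_eq_abs, abs_of_nonneg hc0]
    calc Metric.infDist y {x | u ≤ ⟪x, z⟫} ≤ dist y (y + c • z) :=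
          Metric.infDist_le_dist_of_mem hmem
      _ = c := hdist
      _ ≤ r := hcr

lemma phi_rw : (fun t : ℝ => Real.exp (-t ^ 2 / 2) / Real.sqrt (2 * π))
    = fun t => Real.exp (-(2⁻¹ : ℝ) * t ^ 2) * (Real.sqrt (2 * π))⁻¹ := by
  funext t
  rw [div_eq_mul_inv]
  congr 2
  ring

lemma integrable_phi : Integrable (fun t : ℝ => Real.exp (-t ^ 2 / 2) / Real.sqrt (2 * π)) := by
  rw [phi_rw]
  exact (integrable_exp_neg_mul_sq (by norm_num)).mul_const _

lemma integral_phi : (∫ t : ℝ, Real.exp (-t ^ 2 / 2) / Real.sqrt (2 * π)) = 1 := by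
  rw [phi_rw]
  rw [MeasureTheory.integral_mul_const, integral_gaussian]
  rw [show π / 2⁻¹ = 2 * π by field_simp]
  rw [mul_inv_cancel₀]
  positivity

section halfspace

variable {m : ℕ}

/-- coordinate factor functions -/
noncomputable def ff (v : ℝ) (m : ℕ) : Fin (m + 1) → ℝ → ℝ := fun i t =>
  (if i = 0 then Set.indicator (Set.Ici v) (fun _ => (1:ℝ)) t else 1) *
    (Real.exp (-t ^ 2 / 2) / Real.sqrt (2 * π))

lemma ff_integrable (v : ℝ) (m : ℕ) (i : Fin (m + 1)) : Integrable (ff v m i) := by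
  rcases eq_or_ne i 0 with h | h
  · have : ff v m i = Set.indicator (Set.Ici v)
        (fun t => Real.exp (-t ^ 2 / 2) / Real.sqrt (2 * π)) := by
      funext t
      simp only [ff, h, if_pos rfl]
      by_cases ht : t ∈ Set.Ici v
      · simp [Set.indicator_of_mem ht]
      · simp [Set.indicator_of_notMem ht]
    rw [this]
    exact integrable_phi.indicator measurableSet_Ici
  · have : ff v m i = fun t => Real.exp (-t ^ 2 / 2) / Real.sqrt (2 * π) := by
      funext t
      simp [ff, h]
    rw [this]
    exact integrable_phi

lemma ff_integral (v : ℝ) (m : ℕ) :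
    (∫ w : Fin (m + 1) → ℝ, ∏ i, ff v m i (w i))
      = ∫ t in Set.Ici v, Real.exp (-t ^ 2 / 2) / Real.sqrt (2 * π) := by
  rw [MeasureTheory.integral_fintype_prod_volume_eq_prod (f := ff v m)]
  have h1 : ∀ i : Fin (m + 1), (∫ t, ff v m i t)
      = if i = 0 then (∫ t in Set.Ici v, Real.exp (-t ^ 2 / 2) / Real.sqrt (2 * π)) else 1 := by
    intro i
    rcases eq_or_ne i 0 with h | h
    · rw [if_pos h]
      have : ff v m i = Set.indicator (Set.Ici v)
          (fun t => Real.exp (-t ^ 2 / 2) / Real.sqrt (2 * π)) := by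
        funext t
        simp only [ff, h, if_pos rfl]
        by_cases ht : t ∈ Set.Ici v
        · simp [Set.indicator_of_mem ht]
        · simp [Set.indicator_of_notMem ht]
      rw [this, MeasureTheory.integral_indicator measurableSet_Ici]
    · rw [if_neg h]
      have : ff v m i = fun t => Real.exp (-t ^ 2 / 2) / Real.sqrt (2 * π) := by
        funext t
        simp [ff, h]
      rw [this, integral_phi]
  simp only [h1]
  rw [Finset.prod_ite_eq' Finset.univ (0 : Fin (m + 1))
    (fun _ => ∫ t in Set.Ici v, Real.exp (-t ^ 2 / 2) / Real.sqrt (2 * π))]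
  simp

end halfspace

lemma rpow_fact (k : ℕ) : ((Real.sqrt (2 * π))⁻¹ : ℝ) ^ k = (2 * π) ^ (-(k : ℝ) / 2) := by
  have h2π : (0:ℝ) ≤ 2 * π := by positivity
  rw [Real.sqrt_eq_rpow, ← Real.rpow_neg h2π, ← Real.rpow_natCast ((2*π) ^ (-(1/2) : ℝ)) k,
    ← Real.rpow_mul h2π]
  congr 1
  ring

lemma density_prod (v : ℝ) (m : ℕ) (y : EuclideanSpace ℝ (Fin (m + 1))) :
    Set.indicator {y' : EuclideanSpace ℝ (Fin (m + 1)) | v ≤ y' 0}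
      (fun x => (2 * π) ^ (-((m + 1 : ℕ) : ℝ) / 2) * Real.exp (-‖x‖ ^ 2 / 2)) y
      = ∏ i, ff v m i (y i) := by
  have hnorm : ‖y‖ ^ 2 = ∑ i, (y i) ^ 2 := by
    rw [EuclideanSpace.norm_eq, Real.sq_sqrt (by positivity)]
    simp [Real.norm_eq_abs, sq_abs]
  have hρ : (2 * π) ^ (-((m + 1 : ℕ) : ℝ) / 2) * Real.exp (-‖y‖ ^ 2 / 2)
      = ∏ i, (Real.exp (-(y i) ^ 2 / 2) / Real.sqrt (2 * π)) := by
    have : ∀ i : Fin (m+1), Real.exp (-(y i) ^ 2 / 2) / Real.sqrt (2 * π)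
        = Real.exp (-(y i) ^ 2 / 2) * (Real.sqrt (2 * π))⁻¹ := fun i => div_eq_mul_inv _ _
    simp only [this]
    rw [Finset.prod_mul_distrib, Finset.prod_const, Finset.card_univ, Fintype.card_fin,
      ← Real.exp_sum, rpow_fact]
    rw [mul_comm]
    congr 1
    rw [hnorm]
    rw [← Finset.sum_div, ← Finset.sum_neg_distrib]
  have hsplit : ∀ i : Fin (m + 1), ff v m i (y i)
      = (if i = 0 then Set.indicator (Set.Ici v) (fun _ => (1:ℝ)) (y i) else 1) *
        (Real.exp (-(y i) ^ 2 / 2) / Real.sqrt (2 * π)) := fun i => rfl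
  simp only [hsplit]
  rw [Finset.prod_mul_distrib]
  rw [Finset.prod_ite_eq' Finset.univ (0 : Fin (m + 1))
    (fun i => Set.indicator (Set.Ici v) (fun _ => (1:ℝ)) (y i))]
  simp only [Finset.mem_univ, if_pos]
  by_cases hy : v ≤ y 0
  · rw [Set.indicator_of_mem (by exact hy : y ∈ {y' : EuclideanSpace ℝ (Fin (m+1)) | v ≤ y' 0}),
      Set.indicator_of_mem (by exact hy : y 0 ∈ Set.Ici v), one_mul, hρ]
  · rw [Set.indicator_of_notMem (by exact hy : y ∉ {y' : EuclideanSpace ℝ (Fin (m+1)) | v ≤ y' 0}),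
      Set.indicator_of_notMem (by exact hy : y 0 ∉ Set.Ici v), zero_mul]

lemma gauss_halfspace (m : ℕ) (z : EuclideanSpace ℝ (Fin (m + 1))) (hz : ‖z‖ = 1) (v : ℝ) :
    stdGaussian (m + 1) {x | v ≤ ⟪x, z⟫}
      = ENNReal.ofReal (∫ t in Set.Ici v, Real.exp (-t ^ 2 / 2) / Real.sqrt (2 * π)) := by
  classical
  have hzo : Orthonormal ℝ (Set.restrict {(0 : Fin (m+1))} (fun _ : Fin (m+1) => z)) := by
    constructor
    · intro i; exact hz
    · intro i j hij
      exact absurd (Subsingleton.elim i j) hij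
  obtain ⟨b, hb⟩ := hzo.exists_orthonormalBasis_extension_of_card_eq
    (by simp [finrank_euclideanSpace_fin])
  have hb0 : b 0 = z := hb 0 rfl
  have hinner : ∀ x, ⟪x, z⟫ = b.repr x 0 := by
    intro x
    rw [← hb0, b.repr_apply_apply, real_inner_comm]
  set ρ : EuclideanSpace ℝ (Fin (m+1)) → ℝ :=
    fun x => (2 * π) ^ (-((m + 1 : ℕ) : ℝ) / 2) * Real.exp (-‖x‖ ^ 2 / 2) with hρdef
  have hcont : Continuous fun x : EuclideanSpace ℝ (Fin (m+1)) => ⟪x, z⟫ :=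
    continuous_id.inner continuous_const
  have hS : MeasurableSet {x : EuclideanSpace ℝ (Fin (m+1)) | v ≤ ⟪x, z⟫} :=
    (isClosed_le continuous_const hcont).measurableSet
  set e := (MeasurableEquiv.toLp 2 (Fin (m+1) → ℝ)).symm with he_def
  set F : (Fin (m+1) → ℝ) → ℝ := fun w => ∏ i, ff v m i (w i) with hF_def
  have hpoint : ∀ x, Set.indicator {x | v ≤ ⟪x, z⟫} ρ x = F (e (b.repr x)) := by
    intro x
    have hmem : (x ∈ {x : EuclideanSpace ℝ (Fin (m+1)) | v ≤ ⟪x, z⟫})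
        ↔ (b.repr x ∈ {y' : EuclideanSpace ℝ (Fin (m+1)) | v ≤ y' 0}) := by
      simp only [Set.mem_setOf_eq, hinner]
    have hρeq : ρ (b.repr x) = ρ x := by
      simp only [hρdef]
      rw [LinearIsometryEquiv.norm_map]
    have h1 : Set.indicator {x : EuclideanSpace ℝ (Fin (m+1)) | v ≤ ⟪x, z⟫} ρ x
        = Set.indicator {y' : EuclideanSpace ℝ (Fin (m+1)) | v ≤ y' 0} ρ (b.repr x) := by
      by_cases hx : x ∈ {x : EuclideanSpace ℝ (Fin (m+1)) | v ≤ ⟪x, z⟫}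
      · rw [Set.indicator_of_mem hx, Set.indicator_of_mem (hmem.mp hx), hρeq]
      · rw [Set.indicator_of_notMem hx, Set.indicator_of_notMem (fun h => hx (hmem.mpr h))]
    rw [h1]
    exact density_prod v m (b.repr x)
  have hpi : Integrable F := MeasureTheory.Integrable.fintype_prod (f := ff v m) (ff_integrable v m)
  have he : MeasurePreserving e volume volume :=
    EuclideanSpace.volume_preserving_symm_measurableEquiv_toLp _
  have hG : Integrable (fun y : EuclideanSpace ℝ (Fin (m+1)) => F (e y)) :=
    (he.integrable_comp_emb e.measurableEmbedding).mpr hpi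
  have hB : MeasurePreserving b.repr volume volume := b.measurePreserving_repr
  have hBemb : MeasurableEmbedding (b.repr : EuclideanSpace ℝ (Fin (m+1)) →
      EuclideanSpace ℝ (Fin (m+1))) := b.repr.toHomeomorph.measurableEmbedding
  have hInd : Integrable (Set.indicator {x : EuclideanSpace ℝ (Fin (m+1)) | v ≤ ⟪x, z⟫} ρ) := by
    rw [funext hpoint]
    exact (hB.integrable_comp_emb hBemb).mpr hG
  have hIntOn : IntegrableOn ρ {x : EuclideanSpace ℝ (Fin (m+1)) | v ≤ ⟪x, z⟫} :=
    (integrable_indicator_iff hS).mp hInd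
  have hint1 : (∫ x in {x : EuclideanSpace ℝ (Fin (m+1)) | v ≤ ⟪x, z⟫}, ρ x)
      = ∫ t in Set.Ici v, Real.exp (-t ^ 2 / 2) / Real.sqrt (2 * π) := by
    rw [← MeasureTheory.integral_indicator hS, funext hpoint]
    calc (∫ x, F (e (b.repr x))) = ∫ y : EuclideanSpace ℝ (Fin (m+1)), F (e y) := hB.integral_comp hBemb (fun y => F (e y))
      _ = ∫ w, F w := he.integral_comp e.measurableEmbedding F
      _ = _ := ff_integral v m
  rw [stdGaussian, withDensity_apply _ hS]
  rw [← MeasureTheory.ofReal_integral_eq_lintegral_ofReal hIntOn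
    (MeasureTheory.ae_of_all _ (fun x => by simp only [hρdef]; positivity))]
  rw [hint1]


lemma integral_Ici_phi (v : ℝ) :
    (∫ t in Set.Ici v, Real.exp (-t ^ 2 / 2) / Real.sqrt (2 * π)) = 1 - stdNormalCDF v := by
  have h := intervalIntegral.integral_Iic_add_Ioi (b := v)
    integrable_phi.integrableOn integrable_phi.integrableOn
  rw [integral_phi] at h
  rw [MeasureTheory.integral_Ici_eq_integral_Ioi, stdNormalCDF]
  linarith

lemma integral_Ioc_phi (u r : ℝ) (hr : 0 ≤ r) :
    (∫ t in Set.Ioc (u - r) u, Real.exp (-t ^ 2 / 2) / Real.sqrt (2 * π))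
      = stdNormalCDF u - stdNormalCDF (u - r) := by
  rw [← intervalIntegral.integral_of_le (by linarith : u - r ≤ u),
    ← intervalIntegral.integral_Iic_sub_Iic integrable_phi.integrableOn integrable_phi.integrableOn]
  rfl

theorem stmt7 (k : ℕ) (z : EuclideanSpace ℝ (Fin k)) (hz : ‖z‖ = 1) (u : ℝ)
    (r : ℝ) (hr : 0 ≤ r) :
    tube {x | u ≤ ⟪x, z⟫} r = {x | u - r ≤ ⟪x, z⟫} ∧
    Summable (fun j : ℕ =>
      |r ^ (j + 1) / ((j + 1).factorial : ℝ) *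
        ((1 / Real.sqrt (2 * π)) * hermiteP j u * Real.exp (-u ^ 2 / 2))|) ∧
    HasSum (fun j : ℕ =>
      r ^ (j + 1) / ((j + 1).factorial : ℝ) *
        ((1 / Real.sqrt (2 * π)) * hermiteP j u * Real.exp (-u ^ 2 / 2)))
      ((stdGaussian k (tube {x | u ≤ ⟪x, z⟫} r)).toReal - (1 - stdNormalCDF u)) := by
  cases k with
  | zero =>
    exfalso
    have hz0 : z = 0 := by
      ext i
      exact i.elim0
    rw [hz0, norm_zero] at hz
    norm_num at hz
  | succ m =>
    have htube : tube {x | u ≤ ⟪x, z⟫} r = {x | u - r ≤ ⟪x, z⟫} := tube_eq z hz u r hr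
    refine ⟨htube, ?_, ?_⟩
    · simpa only [hermiteP] using summable_abs_series u r hr
    · have hval : (stdGaussian (m + 1) (tube {x | u ≤ ⟪x, z⟫} r)).toReal
          = ∫ t in Set.Ici (u - r), Real.exp (-t ^ 2 / 2) / Real.sqrt (2 * π) := by
        rw [htube, gauss_halfspace m z hz (u - r),
          ENNReal.toReal_ofReal (MeasureTheory.integral_nonneg (fun t => by positivity))]
      rw [hval, integral_Ici_phi]
      have hv : (1 - stdNormalCDF (u - r)) - (1 - stdNormalCDF u)
          = stdNormalCDF u - stdNormalCDF (u - r) := by ring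
      rw [hv, ← integral_Ioc_phi u r hr]
      simpa only [hermiteP] using hasSum_tail u r hr
end

section
/- Let k ≥ 2 be an integer, let u₁, u₂ ∈ ℝ^k be orthonormal vectors, let a, b ∈ ℝ with a² + b² = 1, and set ν = −(a·u₁ + b·u₂). Then for every w ∈ ℝ^k and every integer m ≥ 0, the m-th derivative at t = 0 of the function t ↦ e^{−‖w + tν‖²/2} equals Σ_{l=0}^m binom(m,l) · a^{m−l} · b^l · H_{m−l}(⟨u₁, w⟩) · H_l(⟨u₂, w⟩) · e^{−‖w‖²/2}. -/
open Real
open scoped RealInnerProductSpace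

lemma hP_gauss (j : ℕ) (s : ℝ) :
    HasDerivAt (fun s : ℝ => hermiteP j s * Real.exp (-(s ^ 2 / 2)))
      (-(hermiteP (j + 1) s * Real.exp (-(s ^ 2 / 2)))) s := by
  have h1 : HasDerivAt (fun s : ℝ => hermiteP j s)
      (Polynomial.aeval s (Polynomial.derivative (Polynomial.hermite j))) s :=
    (Polynomial.hermite j).hasDerivAt_aeval s
  have h2 : HasDerivAt (fun s : ℝ => Real.exp (-(s ^ 2 / 2))) (-s * Real.exp (-(s ^ 2 / 2))) s := by
    have h3 : HasDerivAt (fun s : ℝ => -(s ^ 2 / 2)) (-s) s := by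
      have := ((hasDerivAt_pow 2 s).div_const 2).neg
      refine this.congr_deriv ?_
      norm_num
    simpa [mul_comm] using h3.exp
  have := h1.mul h2
  refine this.congr_deriv ?_
  simp [hermiteP, Polynomial.hermite_succ]
  ring

lemma hP_gauss_affine (j : ℕ) (c x t : ℝ) :
    HasDerivAt (fun t : ℝ => hermiteP j (x - c * t) * Real.exp (-((x - c * t) ^ 2 / 2)))
      (c * (hermiteP (j + 1) (x - c * t) * Real.exp (-((x - c * t) ^ 2 / 2)))) t := by
  have hin : HasDerivAt (fun t : ℝ => x - c * t) (-c) t := by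
    simpa using ((hasDerivAt_id t).const_mul c).const_sub x
  have := (hP_gauss j (x - c * t)).comp t hin
  refine this.congr_deriv ?_
  ring

lemma iteratedDeriv_cmul (c : ℝ) (f : ℝ → ℝ) (n : ℕ) :
    iteratedDeriv n (fun t => c * f t) = fun t => c * iteratedDeriv n f t := by
  induction n with
  | zero => simp [iteratedDeriv_zero]
  | succ n ih =>
    funext t
    rw [iteratedDeriv_succ, ih, iteratedDeriv_succ]
    exact deriv_const_mul_field c

lemma main_ind (a b x y : ℝ) (m : ℕ) :
    iteratedDeriv m (fun t : ℝ =>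
        Real.exp (-((x - a * t) ^ 2 / 2)) * Real.exp (-((y - b * t) ^ 2 / 2))) =
    fun t : ℝ => ∑ l ∈ Finset.range (m + 1), (m.choose l : ℝ) *
      ((a ^ (m - l) * b ^ l) *
        ((hermiteP (m - l) (x - a * t) * Real.exp (-((x - a * t) ^ 2 / 2))) *
         (hermiteP l (y - b * t) * Real.exp (-((y - b * t) ^ 2 / 2))))) := by
  induction m with
  | zero => funext t; simp [hermiteP]
  | succ m IH =>
    funext t
    rw [iteratedDeriv_succ, IH]
    have hterm : ∀ l, HasDerivAt (fun t : ℝ => (m.choose l : ℝ) *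
        ((a ^ (m - l) * b ^ l) *
          ((hermiteP (m - l) (x - a * t) * Real.exp (-((x - a * t) ^ 2 / 2))) *
           (hermiteP l (y - b * t) * Real.exp (-((y - b * t) ^ 2 / 2))))))
        ((m.choose l : ℝ) * ((a ^ (m - l) * b ^ l) *
          ((a * (hermiteP (m - l + 1) (x - a * t) * Real.exp (-((x - a * t) ^ 2 / 2)))) *
            (hermiteP l (y - b * t) * Real.exp (-((y - b * t) ^ 2 / 2))) +
           (hermiteP (m - l) (x - a * t) * Real.exp (-((x - a * t) ^ 2 / 2))) *
            (b * (hermiteP (l + 1) (y - b * t) * Real.exp (-((y - b * t) ^ 2 / 2))))))) t := by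
      intro l
      exact (((hP_gauss_affine (m - l) a x t).mul (hP_gauss_affine l b y t)).const_mul _).const_mul _
    have hsum := HasDerivAt.fun_sum (fun l (_ : l ∈ Finset.range (m + 1)) => hterm l)
    rw [hsum.deriv]
    have key := Finset.sum_choose_succ_mul (fun l j => (a ^ j * b ^ l) *
        ((hermiteP j (x - a * t) * Real.exp (-((x - a * t) ^ 2 / 2))) *
         (hermiteP l (y - b * t) * Real.exp (-((y - b * t) ^ 2 / 2))))) m
    rw [key, ← Finset.sum_add_distrib]
    refine Finset.sum_congr rfl fun l hl => ?_
    have hlm : l ≤ m := Nat.lt_succ_iff.mp (Finset.mem_range.mp hl)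
    have h1 : m + 1 - l = (m - l) + 1 := by omega
    rw [h1]
    ring

theorem stmt12 (k : ℕ) (hk : 2 ≤ k) (u₁ u₂ : EuclideanSpace ℝ (Fin k))
    (hu₁ : ‖u₁‖ = 1) (hu₂ : ‖u₂‖ = 1) (hu₁₂ : ⟪u₁, u₂⟫ = 0)
    (a b : ℝ) (hab : a ^ 2 + b ^ 2 = 1) (w : EuclideanSpace ℝ (Fin k)) (m : ℕ) :
    iteratedDeriv m
        (fun t : ℝ => Real.exp (-‖w + t • (-(a • u₁ + b • u₂))‖ ^ 2 / 2)) 0 =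
      ∑ l ∈ Finset.range (m + 1),
        (Nat.choose m l : ℝ) * a ^ (m - l) * b ^ l *
          hermiteP (m - l) ⟪u₁, w⟫ * hermiteP l ⟪u₂, w⟫ * Real.exp (-‖w‖ ^ 2 / 2) := by
  set x : ℝ := ⟪u₁, w⟫ with hx
  set y : ℝ := ⟪u₂, w⟫ with hy
  set r : ℝ := ‖w‖ ^ 2 - x ^ 2 - y ^ 2 with hr
  have hnorm : ∀ t : ℝ, ‖w + t • (-(a • u₁ + b • u₂))‖ ^ 2
      = (x - a * t) ^ 2 + (y - b * t) ^ 2 + r := by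
    intro t
    have h1 : ‖w + t • (-(a • u₁ + b • u₂))‖ ^ 2
        = ‖w‖ ^ 2 + 2 * ⟪w, t • (-(a • u₁ + b • u₂))⟫ + ‖t • (-(a • u₁ + b • u₂))‖ ^ 2 :=
      norm_add_sq_real w _
    have h2 : ⟪w, t • (-(a • u₁ + b • u₂))⟫ = t * (-(a * x + b * y)) := by
      rw [real_inner_smul_right, inner_neg_right, inner_add_right, real_inner_smul_right,
        real_inner_smul_right, real_inner_comm u₁ w, real_inner_comm u₂ w, ← hx, ← hy]
    have h3 : ‖t • (-(a • u₁ + b • u₂))‖ ^ 2 = t ^ 2 := by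
      rw [norm_smul, norm_neg, mul_pow]
      have hone : ‖a • u₁ + b • u₂‖ ^ 2 = 1 := by
        rw [norm_add_sq_real, norm_smul, norm_smul, real_inner_smul_left,
          real_inner_smul_right, hu₁₂, hu₁, hu₂]
        simp [mul_pow, sq_abs]
        linarith [hab]
      rw [hone]
      simp [sq_abs]
    rw [h1, h2, h3, hr]
    linear_combination (-(t ^ 2)) * hab
  have hfun : (fun t : ℝ => Real.exp (-‖w + t • (-(a • u₁ + b • u₂))‖ ^ 2 / 2))
      = fun t : ℝ => Real.exp (-(r / 2)) *
        (Real.exp (-((x - a * t) ^ 2 / 2)) * Real.exp (-((y - b * t) ^ 2 / 2))) := by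
    funext t
    rw [hnorm t, ← Real.exp_add, ← Real.exp_add]
    congr 1
    ring
  rw [hfun, iteratedDeriv_cmul, main_ind]
  simp only [mul_zero, sub_zero]
  rw [Finset.mul_sum]
  refine Finset.sum_congr rfl fun l hl => ?_
  have hE : Real.exp (-(r / 2)) * (Real.exp (-(x ^ 2 / 2)) * Real.exp (-(y ^ 2 / 2)))
      = Real.exp (-‖w‖ ^ 2 / 2) := by
    rw [← Real.exp_add, ← Real.exp_add]
    congr 1
    rw [hr]; ring
  rw [← hE]
  ring
end
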